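/- Let P ∈ ℝ^{n×n} and Q ∈ ℝ^{m×m} be symmetric matrices and let B ∈ ℝ^{m×n} be arbitrary. Consider the real (n+m)×(n+m) block matrix J = [[−P, −Bᵀ], [B, −Q]]. Then every complex eigenvalue λ of J satisfies |Im(λ)| ≤ √(λ_max(BᵀB)), where λ_max(BᵀB) is the largest eigenvalue of the symmetric positive semidefinite matrix BᵀB. In particular, this bound is independent of P and Q. -/

import Mathlib

open Matrix
open scoped Pointwise ComplexOrder

private lemma exists_mulVec_eq_smul {𝕜 : Type*} [Field 𝕜] {k : Type*} [Fintype k] [DecidableEq k]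
    {M : Matrix k k 𝕜} {μ : 𝕜} (h : μ ∈ spectrum 𝕜 M) :
    ∃ v : k → 𝕜, v ≠ 0 ∧ M *ᵥ v = μ • v := by
  rw [← AlgEquiv.spectrum_eq (Matrix.toLinAlgEquiv' (n := k) (R := 𝕜))] at h
  obtain ⟨v, hv⟩ :=
    (Module.End.hasEigenvalue_iff_mem_spectrum.mpr h).exists_hasEigenvector
  exact ⟨v, hv.2, by simpa [Matrix.toLinAlgEquiv'_apply] using hv.apply_eq_smul⟩

private lemma conj_dotProduct_mulVec {k l : Type*} [Fintype k] [Fintype l]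
    (a : k → ℂ) (M : Matrix k l ℂ) (b : l → ℂ) :
    (starRingEnd ℂ) (star a ⬝ᵥ (M *ᵥ b)) = star b ⬝ᵥ (Mᴴ *ᵥ a) := by
  rw [show (starRingEnd ℂ) (star a ⬝ᵥ (M *ᵥ b)) = star (star a ⬝ᵥ (M *ᵥ b)) from rfl,
    ← Matrix.star_dotProduct, Matrix.star_mulVec, Matrix.dotProduct_mulVec,
    dotProduct_comm]

private lemma psd_map_ofReal {k : ℕ} {S : Matrix (Fin k) (Fin k) ℝ} (hS : S.PosSemidef) :
    (S.map Complex.ofReal).PosSemidef := by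
  obtain ⟨A, rfl⟩ : ∃ A : Matrix (Fin k) (Fin k) ℝ, S = Aᴴ * A := by
    open scoped MatrixOrder in exact CStarAlgebra.nonneg_iff_eq_star_mul_self.mp hS.nonneg
  have h1 : (Aᴴ * A).map Complex.ofReal
      = (A.map Complex.ofReal)ᴴ * (A.map Complex.ofReal) := by
    ext i j
    simp [Matrix.mul_apply, Matrix.conjTranspose_apply, Complex.conj_ofReal]
  rw [h1]
  exact Matrix.posSemidef_conjTranspose_mul_self _

private lemma psd_shift {k : ℕ} (S : Matrix (Fin k) (Fin k) ℝ) (hS : S.IsSymm)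
    (b : ℝ) (hb : ∀ μ ∈ spectrum ℝ S, μ ≤ b) :
    (b • (1 : Matrix (Fin k) (Fin k) ℝ) - S).PosSemidef := by
  have hT : (b • (1 : Matrix (Fin k) (Fin k) ℝ) - S).IsHermitian := by
    simp [Matrix.IsHermitian, Matrix.conjTranspose_sub, Matrix.conjTranspose_smul, hS.eq]
  refine hT.posSemidef_iff_eigenvalues_nonneg.mpr (Pi.le_def.mpr fun i => show (0:ℝ) ≤ _ from ?_)
  have hmem := hT.eigenvalues_mem_spectrum_real i
  have hspec : spectrum ℝ (b • (1 : Matrix (Fin k) (Fin k) ℝ) - S)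
      = {b} - spectrum ℝ S := by
    have h := spectrum.singleton_sub_eq (R := ℝ) S b
    rw [Algebra.algebraMap_eq_smul_one] at h
    exact h.symm
  rw [hspec] at hmem
  obtain ⟨r, hr, s, hs, hrs⟩ := Set.mem_sub.mp hmem
  rw [Set.mem_singleton_iff] at hr
  subst hr
  have := hb s hs
  linarith [hrs]

private lemma bmax_nonneg' {n m : ℕ} (B : Matrix (Fin m) (Fin n) ℝ) (bmax : ℝ)
    (hbmax : IsGreatest (spectrum ℝ (Bᵀ * B)) bmax) : 0 ≤ bmax := by
  obtain ⟨u, hu0, hueq⟩ := exists_mulVec_eq_smul hbmax.1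
  have key : u ⬝ᵥ ((Bᵀ * B) *ᵥ u) = (B *ᵥ u) ⬝ᵥ (B *ᵥ u) := by
    rw [← Matrix.mulVec_mulVec, Matrix.dotProduct_mulVec, Matrix.vecMul_transpose]
  rw [hueq, dotProduct_smul] at key
  have h1 : 0 ≤ (B *ᵥ u) ⬝ᵥ (B *ᵥ u) := Finset.sum_nonneg fun i _ => mul_self_nonneg _
  have h2 : 0 < u ⬝ᵥ u := by
    obtain ⟨i, hi⟩ := Function.ne_iff.mp hu0
    exact Finset.sum_pos' (fun j _ => mul_self_nonneg _)
      ⟨i, Finset.mem_univ i, mul_self_pos.mpr hi⟩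
  have : bmax * (u ⬝ᵥ u) = (B *ᵥ u) ⬝ᵥ (B *ᵥ u) := by simpa using key
  nlinarith

private lemma dot_self_eq_normsq {k : Type*} [Fintype k] (a : k → ℂ) :
    star a ⬝ᵥ a = ((‖(WithLp.equiv 2 (k → ℂ)).symm a‖ : ℝ) : ℂ) ^ 2 := by
  rw [WithLp.equiv_symm_apply, dotProduct_comm, ← EuclideanSpace.inner_toLp_toLp]
  exact inner_self_eq_norm_sq_to_K _

private lemma dot_norm_le {k : Type*} [Fintype k] (a b : k → ℂ) :
    ‖star a ⬝ᵥ b‖ ≤ ‖(WithLp.equiv 2 (k → ℂ)).symm a‖ * ‖(WithLp.equiv 2 (k → ℂ)).symm b‖ := by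
  rw [WithLp.equiv_symm_apply, dotProduct_comm, ← EuclideanSpace.inner_toLp_toLp]
  exact norm_inner_le_norm _ _

/-- For `J = [[−P, −Bᵀ], [B, −Q]]` with `P`, `Q` symmetric and `B` arbitrary, every
complex eigenvalue `λ` of `J` satisfies `|Im λ| ≤ √(λ_max(BᵀB))`, a bound independent
of `P` and `Q`. -/
theorem gan_jacobian_imaginary_part_bound
    {n m : ℕ} (P : Matrix (Fin n) (Fin n) ℝ) (Q : Matrix (Fin m) (Fin m) ℝ)
    (B : Matrix (Fin m) (Fin n) ℝ)
    (hPsymm : P.IsSymm) (hQsymm : Q.IsSymm)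
    (J : Matrix (Fin n ⊕ Fin m) (Fin n ⊕ Fin m) ℝ)
    (hJ : J = Matrix.fromBlocks (-P) (-Bᵀ) B (-Q))
    (bmax : ℝ) (hbmax : IsGreatest (spectrum ℝ (Bᵀ * B)) bmax) :
    ∀ lam ∈ spectrum ℂ (J.map Complex.ofReal), |lam.im| ≤ Real.sqrt bmax := by
  intro lam hlam
  classical
  have hb0 : 0 ≤ bmax := bmax_nonneg' B bmax hbmax
  obtain ⟨v, hv0, hveq⟩ := exists_mulVec_eq_smul hlam
  set x : Fin n → ℂ := fun i => v (Sum.inl i) with hxdef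
  set y : Fin m → ℂ := fun i => v (Sum.inr i) with hydef
  have hvelim : v = Sum.elim x y := by funext i; cases i <;> rfl
  set P' : Matrix (Fin n) (Fin n) ℂ := P.map Complex.ofReal with hP'def
  set Q' : Matrix (Fin m) (Fin m) ℂ := Q.map Complex.ofReal with hQ'def
  set B' : Matrix (Fin m) (Fin n) ℂ := B.map Complex.ofReal with hB'def
  have hBH : B'ᴴ = B'ᵀ := by
    ext i j
    simp [hB'def, Matrix.conjTranspose_apply, Complex.conj_ofReal]
  have hPH : P'ᴴ = P' := by
    ext i j
    simp [hP'def, Matrix.conjTranspose_apply, Matrix.map_apply, Complex.star_def,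
      Complex.conj_ofReal, hPsymm.apply i j]
  have hQH : Q'ᴴ = Q' := by
    ext i j
    simp [hQ'def, Matrix.conjTranspose_apply, Matrix.map_apply, Complex.star_def,
      Complex.conj_ofReal, hQsymm.apply i j]
  have hM : J.map Complex.ofReal = Matrix.fromBlocks (-P') (-(B'ᵀ)) B' (-Q') := by
    subst hJ
    ext i j
    cases i <;> cases j <;>
      simp [hP'def, hQ'def, hB'def, Matrix.map_apply, Matrix.fromBlocks]
  set w : Fin m → ℂ := B' *ᵥ x with hwdef
  set z : ℂ := star y ⬝ᵥ w with hzdef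
  set Nx : ℝ := ‖(WithLp.equiv 2 (Fin n → ℂ)).symm x‖ with hNx
  set Ny : ℝ := ‖(WithLp.equiv 2 (Fin m → ℂ)).symm y‖ with hNy
  set Nw : ℝ := ‖(WithLp.equiv 2 (Fin m → ℂ)).symm w‖ with hNw
  set Nv : ℝ := ‖(WithLp.equiv 2 ((Fin n ⊕ Fin m) → ℂ)).symm v‖ with hNv
  have hteq : lam * (star v ⬝ᵥ v) = star v ⬝ᵥ ((J.map Complex.ofReal) *ᵥ v) := by
    rw [hveq, dotProduct_smul, smul_eq_mul]
  have hstar : star (Sum.elim x y) = Sum.elim (star x) (star y) := by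
    funext i; cases i <;> rfl
  have ht2 : star v ⬝ᵥ ((J.map Complex.ofReal) *ᵥ v)
      = -(star x ⬝ᵥ (P' *ᵥ x)) - (star x ⬝ᵥ (B'ᵀ *ᵥ y))
        + (z - star y ⬝ᵥ (Q' *ᵥ y)) := by
    rw [hM, hvelim, hstar, Matrix.fromBlocks_mulVec, sumElim_dotProduct_sumElim]
    simp only [Matrix.neg_mulVec, dotProduct_add, dotProduct_neg, hzdef, hwdef,
      Sum.elim_comp_inl, Sum.elim_comp_inr]
    ring
  have himP : (star x ⬝ᵥ (P' *ᵥ x)).im = 0 := by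
    have hc := conj_dotProduct_mulVec x P' x
    rw [hPH] at hc
    exact Complex.conj_eq_iff_im.mp hc
  have himQ : (star y ⬝ᵥ (Q' *ᵥ y)).im = 0 := by
    have hc := conj_dotProduct_mulVec y Q' y
    rw [hQH] at hc
    exact Complex.conj_eq_iff_im.mp hc
  have hpair : star x ⬝ᵥ (B'ᵀ *ᵥ y) = (starRingEnd ℂ) z := by
    have hc := conj_dotProduct_mulVec y B' x
    rw [hBH] at hc
    exact hc.symm
  have hvsplit : star v ⬝ᵥ v = star x ⬝ᵥ x + star y ⬝ᵥ y := by
    rw [hvelim, hstar]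
    exact sumElim_dotProduct_sumElim _ _ _ _
  have hvsq : Nv ^ 2 = Nx ^ 2 + Ny ^ 2 := by
    have h := hvsplit
    rw [dot_self_eq_normsq, dot_self_eq_normsq, dot_self_eq_normsq] at h
    exact_mod_cast h
  have himeq : lam.im * Nv ^ 2 = 2 * z.im := by
    have h := congrArg Complex.im (hteq.trans ht2)
    rw [dot_self_eq_normsq] at h
    simp only [Complex.mul_im, Complex.sub_im, Complex.add_im, Complex.neg_im,
      himP, himQ, hpair, Complex.conj_im, ← Complex.ofReal_pow, Complex.ofReal_im,
      Complex.ofReal_re] at h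
    rw [← hNv] at h
    linarith [h]
  -- PSD bound : Nw² ≤ bmax * Nx²
  have hpsd := psd_map_ofReal (psd_shift (Bᵀ * B) (by rw [Matrix.IsSymm, Matrix.transpose_mul, Matrix.transpose_transpose]) bmax
    (fun μ hμ => hbmax.2 hμ))
  have hTexp : (bmax • (1 : Matrix (Fin n) (Fin n) ℝ) - Bᵀ * B).map Complex.ofReal
      = (bmax : ℂ) • (1 : Matrix (Fin n) (Fin n) ℂ) - B'ᵀ * B' := by
    ext i j
    simp [hB'def, Matrix.map_apply, Matrix.sub_apply, Matrix.smul_apply, Matrix.mul_apply,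
      Matrix.one_apply, apply_ite Complex.ofReal]
  have hquad : star x ⬝ᵥ (((bmax : ℂ) • (1 : Matrix (Fin n) (Fin n) ℂ) - B'ᵀ * B') *ᵥ x)
      = (bmax : ℂ) * (star x ⬝ᵥ x) - star w ⬝ᵥ w := by
    rw [Matrix.sub_mulVec, dotProduct_sub, Matrix.smul_mulVec,
      Matrix.one_mulVec, dotProduct_smul, smul_eq_mul]
    congr 1
    have hsw : star w = star x ᵥ* B'ᵀ := by
      rw [hwdef, Matrix.star_mulVec, hBH]
    rw [← Matrix.mulVec_mulVec, Matrix.dotProduct_mulVec, ← hsw]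
  have hkey : (0 : ℂ) ≤ (bmax : ℂ) * (star x ⬝ᵥ x) - star w ⬝ᵥ w := by
    rw [← hquad, ← hTexp]
    exact hpsd.dotProduct_mulVec_nonneg x
  have hwle : Nw ^ 2 ≤ bmax * Nx ^ 2 := by
    rw [dot_self_eq_normsq, dot_self_eq_normsq] at hkey
    have h := (Complex.le_def.mp hkey).1
    simp only [Complex.zero_re, Complex.sub_re, Complex.mul_re, ← Complex.ofReal_pow,
      Complex.ofReal_re, Complex.ofReal_im, Complex.mul_im, mul_zero, zero_mul,
      sub_zero] at h
    rw [← hNx, ← hNw] at h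
    linarith
  have hzim : |z.im| ≤ Ny * Nw := by
    refine le_trans (Complex.abs_im_le_norm z) (le_trans ?_ (dot_norm_le y w))
    rw [hzdef]
  have hwle' : Nw ≤ Real.sqrt bmax * Nx := by
    have h1 : Nw = Real.sqrt (Nw ^ 2) := (Real.sqrt_sq (norm_nonneg _)).symm
    rw [h1]
    calc Real.sqrt (Nw ^ 2) ≤ Real.sqrt (bmax * Nx ^ 2) := Real.sqrt_le_sqrt hwle
      _ = Real.sqrt bmax * Nx := by
          rw [Real.sqrt_mul hb0, Real.sqrt_sq (norm_nonneg _)]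
  have hvpos : 0 < Nv ^ 2 := by
    have hEv : (WithLp.equiv 2 ((Fin n ⊕ Fin m) → ℂ)).symm v ≠ 0 := by
      intro h
      apply hv0
      have := congrArg (WithLp.equiv 2 ((Fin n ⊕ Fin m) → ℂ)) h
      simpa using this
    have : 0 < Nv := by rw [hNv]; exact norm_pos_iff.mpr hEv
    positivity
  have hfinal : |lam.im| * Nv ^ 2 ≤ Real.sqrt bmax * Nv ^ 2 := by
    have h1 : |lam.im| * Nv ^ 2 = |2 * z.im| := by
      rw [← abs_of_nonneg (le_of_lt hvpos), ← abs_mul, himeq]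
    rw [h1, hvsq]
    have h2 : |2 * z.im| ≤ 2 * (Ny * Nw) := by
      rw [abs_mul, abs_of_nonneg (by norm_num : (0:ℝ) ≤ 2)]
      exact mul_le_mul_of_nonneg_left hzim (by norm_num)
    have hsq : 0 ≤ Real.sqrt bmax := Real.sqrt_nonneg _
    have hNy0 : 0 ≤ Ny := norm_nonneg _
    have hNx0 : 0 ≤ Nx := norm_nonneg _
    nlinarith [sq_nonneg (Nx - Ny), mul_le_mul_of_nonneg_left hwle' hNy0]
  exact le_of_mul_le_mul_right hfinal hvpos
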